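/- Let A be a unital associative commutative k-algebra and let C be a k-module together with an alternating k-bilinear map ⟪·,·⟫ : A × A → C satisfying ⟪a, bc⟫ + ⟪b, ca⟫ + ⟪c, ab⟫ = 0 for all a,b,c ∈ A. For n ≥ 2, the map τ : sl(n,A) × sl(n,A) → C defined by τ(x,y) = Σ_{i,j} ⟪x_{ij}, y_{ji}⟫ is a 2-cocycle on the Lie algebra sl(n,A), i.e., τ is bilinear, alternating, and satisfies τ(x,[y,z]) + τ(y,[z,x]) + τ(z,[x,y]) = 0. -/
import Mathlib

noncomputable section

open Function

universe u

variable (k : Type u) [CommRing k] (A : Type u) [CommRing A] [Algebra k A]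

/-- The 2-cochain `τ(x,y) = ∑_{i,j} ⟪x_{ij}, y_{ji}⟫` on `n × n` matrices, for an
alternating bilinear form `b = ⟪·,·⟫` on `A`. -/
def tauC {C : Type u} [AddCommGroup C] [Module k C] (b : A →ₗ[k] A →ₗ[k] C) {n : ℕ}
    (x y : Matrix (Fin n) (Fin n) A) : C :=
  ∑ i, ∑ j, b (x i j) (y j i)

private lemma cyc3 {C : Type u} [AddCommGroup C] {n : ℕ} (F : Fin n → Fin n → Fin n → C) :
    (∑ i, ∑ j, ∑ l, F i j l) = ∑ i, ∑ j, ∑ l, F l i j := by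
  rw [Finset.sum_comm]
  exact Finset.sum_congr rfl fun j _ => Finset.sum_comm

private lemma cyc3' {C : Type u} [AddCommGroup C] {n : ℕ} (F : Fin n → Fin n → Fin n → C) :
    (∑ i, ∑ j, ∑ l, F i j l) = ∑ i, ∑ j, ∑ l, F j l i := by
  rw [cyc3, cyc3]

/-- `τ` is a 2-cocycle on the Lie algebra `sl(n,A)` of trace-zero matrices:
bilinear, alternating, and satisfying the cocycle identity. -/
theorem statement15 (C : Type u) [AddCommGroup C] [Module k C] (b : A →ₗ[k] A →ₗ[k] C)
    (halt : ∀ a : A, b a a = 0)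
    (hcyc : ∀ a c d : A, b a (c * d) + b c (d * a) + b d (a * c) = 0)
    (n : ℕ) (hn : 2 ≤ n) :
    (∀ x x' y : Matrix (Fin n) (Fin n) A,
      Matrix.trace x = 0 → Matrix.trace x' = 0 → Matrix.trace y = 0 →
        tauC k A b (x + x') y = tauC k A b x y + tauC k A b x' y) ∧
    (∀ (x y y' : Matrix (Fin n) (Fin n) A),
      Matrix.trace x = 0 → Matrix.trace y = 0 → Matrix.trace y' = 0 →
        tauC k A b x (y + y') = tauC k A b x y + tauC k A b x y') ∧
    (∀ (c : k) (x y : Matrix (Fin n) (Fin n) A),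
      Matrix.trace x = 0 → Matrix.trace y = 0 →
        tauC k A b (c • x) y = c • tauC k A b x y ∧
        tauC k A b x (c • y) = c • tauC k A b x y) ∧
    (∀ x : Matrix (Fin n) (Fin n) A, Matrix.trace x = 0 → tauC k A b x x = 0) ∧
    (∀ x y : Matrix (Fin n) (Fin n) A, Matrix.trace x = 0 → Matrix.trace y = 0 →
        tauC k A b x y + tauC k A b y x = 0) ∧
    (∀ x y z : Matrix (Fin n) (Fin n) A,
      Matrix.trace x = 0 → Matrix.trace y = 0 → Matrix.trace z = 0 →
        tauC k A b x ⁅y, z⁆ + tauC k A b y ⁅z, x⁆ + tauC k A b z ⁅x, y⁆ = 0) := by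
  have hskew : ∀ a a' : A, b a a' + b a' a = 0 := by
    intro a a'
    have h := halt (a + a')
    simpa [map_add, halt a, halt a', add_comm, add_assoc, add_left_comm] using h
  refine ⟨?_, ?_, ?_, ?_, ?_, ?_⟩
  · intro x x' y _ _ _
    simp [tauC, Matrix.add_apply, map_add, Finset.sum_add_distrib]
  · intro x y y' _ _ _
    simp [tauC, Matrix.add_apply, map_add, Finset.sum_add_distrib]
  · intro c x y _ _
    constructor <;> simp [tauC, Matrix.smul_apply, map_smul, Finset.smul_sum]
  · intro x _
    have : tauC k A b x x = ∑ p ∈ Finset.univ ×ˢ Finset.univ,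
        b (x p.1 p.2) (x p.2 p.1) := by
      rw [tauC, ← Finset.sum_product']
    rw [this]
    refine Finset.sum_involution (fun p _ => p.swap) ?_ ?_ (fun p _ => Finset.mem_univ _)
      (fun p _ => Prod.swap_swap p)
    · intro p _
      exact hskew _ _
    · intro p _ hne
      rintro h
      apply hne
      have : p.2 = p.1 := by
        have := congrArg Prod.fst h
        simpa [Prod.swap] using this
      rw [← this]
      exact halt _
  · intro x y _ _
    have h2 : tauC k A b y x = ∑ i, ∑ j, b (y j i) (x i j) := by
      rw [tauC]
      exact Finset.sum_comm
    rw [tauC, h2, ← Finset.sum_add_distrib]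
    refine Finset.sum_eq_zero fun i _ => ?_
    rw [← Finset.sum_add_distrib]
    exact Finset.sum_eq_zero fun j _ => hskew _ _
  · intro x y z _ _ _
    have e1 : tauC k A b x ⁅y, z⁆ =
        (∑ i, ∑ j, ∑ l, b (x i j) (y j l * z l i)) -
        ∑ i, ∑ j, ∑ l, b (x i j) (z j l * y l i) := by
      simp [tauC, Ring.lie_def, Matrix.sub_apply, Matrix.mul_apply, map_sub, map_sum,
        Finset.sum_sub_distrib]
    have e2 : tauC k A b y ⁅z, x⁆ =
        (∑ i, ∑ j, ∑ l, b (y i j) (z j l * x l i)) -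
        ∑ i, ∑ j, ∑ l, b (y i j) (x j l * z l i) := by
      simp [tauC, Ring.lie_def, Matrix.sub_apply, Matrix.mul_apply, map_sub, map_sum,
        Finset.sum_sub_distrib]
    have e3 : tauC k A b z ⁅x, y⁆ =
        (∑ i, ∑ j, ∑ l, b (z i j) (x j l * y l i)) -
        ∑ i, ∑ j, ∑ l, b (z i j) (y j l * x l i) := by
      simp [tauC, Ring.lie_def, Matrix.sub_apply, Matrix.mul_apply, map_sub, map_sum,
        Finset.sum_sub_distrib]
    rw [e1, e2, e3,
      cyc3' (fun i j l => b (y i j) (z j l * x l i)),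
      cyc3 (fun i j l => b (y i j) (x j l * z l i)),
      cyc3 (fun i j l => b (z i j) (x j l * y l i)),
      cyc3' (fun i j l => b (z i j) (y j l * x l i))]
    have hP : ∀ i j l : Fin n,
        b (x i j) (y j l * z l i) + b (y j l) (z l i * x i j) + b (z l i) (x i j * y j l) = 0 :=
      fun i j l => hcyc _ _ _
    have hQ : ∀ i j l : Fin n,
        b (x i j) (z j l * y l i) + b (z j l) (y l i * x i j) + b (y l i) (x i j * z j l) = 0 :=
      fun i j l => hcyc _ _ _
    have key : (∑ i, ∑ j, ∑ l, (b (x i j) (y j l * z l i) + b (y j l) (z l i * x i j) +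
          b (z l i) (x i j * y j l))) -
        ∑ i, ∑ j, ∑ l, (b (x i j) (z j l * y l i) + b (z j l) (y l i * x i j) +
          b (y l i) (x i j * z j l)) = 0 := by
      rw [Finset.sum_eq_zero fun i _ => Finset.sum_eq_zero fun j _ =>
        Finset.sum_eq_zero fun l _ => hP i j l,
        Finset.sum_eq_zero fun i _ => Finset.sum_eq_zero fun j _ =>
        Finset.sum_eq_zero fun l _ => hQ i j l, sub_zero]
    rw [← key]
    simp only [Finset.sum_add_distrib, Finset.sum_sub_distrib]
    abel
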